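/- For $t \geq 1$, let $\pi \in \overline{\mathcal{B}}^{=}_0(\alpha_1,\ldots,\alpha_\lambda;\eta,k,r|t)$ and let $\mu = D_t(\pi)$ be obtained by removing the overlined part $\overline{t\eta}$ if $s(\pi) = \overline{t\eta}$, and otherwise removing a non-overlined part $t\eta$. Then $\mu \in \overline{\mathcal{B}}^{>}_0(\alpha_1,\ldots,\alpha_\lambda;\eta,k,r|t)$, $|\mu| = |\pi| - t\eta$, and $\ell(\mu) = \ell(\pi) - 1$. -/

import Mathlib

/-- A part of an overpartition: a size together with a flag telling
whether the part is overlined. -/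
structure OPart where
  size : ℕ
  isOver : Bool
deriving DecidableEq

/-- The value of a part in the ordering `1̄ < 1 < 2̄ < 2 < ⋯`:
an overlined part of size `t` has value `2t - 1`, a non-overlined one `2t`. -/
def OPart.val (p : OPart) : ℕ := 2 * p.size - (if p.isOver then 1 else 0)

def dpart : OPart := ⟨0, false⟩

/-- value of the `i`-th part (0-based). -/
def pval (π : List OPart) (i : ℕ) : ℕ := (π.getD i dpart).val

def pover (π : List OPart) (i : ℕ) : Bool := (π.getD i dpart).isOver

def psize (π : List OPart) (i : ℕ) : ℕ := (π.getD i dpart).size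

/-- the weight `|π|`: the sum of the sizes of the parts. -/
def wt (π : List OPart) : ℕ := (π.map OPart.size).sum

/-- An overpartition: a sequence of positive parts, non-increasing in the
ordering `1̄ < 1 < 2̄ < 2 < ⋯`, in which each size is overlined at most once
(the overlined copy, being smallest among equal sizes, is the last occurrence). -/
def IsOverPartition (π : List OPart) : Prop :=
  List.Pairwise (fun p q : OPart => q.val ≤ p.val) π ∧
  (∀ p ∈ π, 0 < p.size) ∧
  (∀ t : ℕ, π.count (⟨t, true⟩ : OPart) ≤ 1)

/-- `{π_{i+l}}_{0 ≤ l ≤ m-1}` is an `m`-band of `π`: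
`π_i ≤ π_{i+m-1} + η`, with strict inequality if `π_i` is overlined. -/
def IsBand (η : ℕ) (π : List OPart) (m i : ℕ) : Prop :=
  i + m ≤ π.length ∧
  pval π i ≤ pval π (i + m - 1) + 2 * η ∧
  (pover π i = true → pval π i < pval π (i + m - 1) + 2 * η)

/-- `V̄_π(N)`: the number of overlined parts of value at most `N`
whose size is not divisible by `η`. -/
def Vbar (η : ℕ) (π : List OPart) (N : ℕ) : ℕ :=
  π.countP (fun p => p.isOver && decide (p.val ≤ N) && !(decide (p.size % η = 0)))

/-- `Ō_π(N)`: the number of overlined parts of value at least `N`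
whose size is divisible by `η`. -/
def Obar (η : ℕ) (π : List OPart) (N : ℕ) : ℕ :=
  π.countP (fun p => p.isOver && decide (N ≤ p.val) && decide (p.size % η = 0))

/-- `f_{≤η}(π)`: the number of parts not exceeding `η`. -/
def fLe (η : ℕ) (π : List OPart) : ℕ :=
  π.countP (fun p => decide (p.val ≤ 2 * η))

/-- `[|π_i|/η] + ⋯ + [|π_{i+m-1}|/η]`. -/
def bandSum (η : ℕ) (π : List OPart) (i m : ℕ) : ℕ :=
  ∑ l ∈ Finset.range m, psize π (i + l) / η

/-- Every part is congruent to `0, α_1, …, α_λ` modulo `η`. -/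
def CongParts (α : ℕ → ℕ) (lam η : ℕ) (π : List OPart) : Prop :=
  ∀ p ∈ π, p.size % η = 0 ∨ ∃ s, 1 ≤ s ∧ s ≤ lam ∧ p.size % η = α s

/-- The class `B̄(α_1,…,α_λ; η, k, r)`: conditions (1)–(4) of the definition
of `B̄₀`. -/
def InBbar (α : ℕ → ℕ) (lam η k r : ℕ) (π : List OPart) : Prop :=
  IsOverPartition π ∧
  CongParts α lam η π ∧
  (∀ p ∈ π, p.isOver = false → η ∣ p.size) ∧
  (∀ i, i + k ≤ π.length →
    pval π (i + k - 1) + 2 * η ≤ pval π i ∧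
    (pover π i = false → pval π (i + k - 1) + 2 * η < pval π i)) ∧
  fLe η π ≤ r

/-- An `m`-band at `i` is even:
`[|π_i|/η]+⋯+[|π_{i+m-1}|/η] ≡ r - 1 + V̄_π(π_i) + Ō_π(π_{i+m-1}) (mod 2)`. -/
def EvenBand (η r : ℕ) (π : List OPart) (m i : ℕ) : Prop :=
  Int.ModEq 2 (bandSum η π i m)
    ((r : ℤ) - 1 + (Vbar η π (pval π i) : ℤ) + (Obar η π (pval π (i + m - 1)) : ℤ))

/-- Condition (5) of the definition of `B̄₀`. -/
def Cond5 (η k r : ℕ) (π : List OPart) : Prop :=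
  fLe η π = r → (⟨η, true⟩ : OPart) ∉ π →
    ∃ i, IsBand η π (k - 1) i ∧ pval π i < 2 * (2 * η) - 1

/-- The class `B̄₀(α_1,…,α_λ; η, k, r)`: conditions (1)–(6). -/
def InB0 (α : ℕ → ℕ) (lam η k r : ℕ) (π : List OPart) : Prop :=
  InBbar α lam η k r π ∧ Cond5 η k r π ∧
  ∀ i, IsBand η π (k - 1) i → EvenBand η r π (k - 1) i

/-- `s(π) > t̄η`: every overlined part divisible by `η` has size `> tη`. -/
def SGt (η t : ℕ) (π : List OPart) : Prop :=
  ∀ p ∈ π, p.isOver = true → η ∣ p.size → t * η < p.size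

/-- `s(π) = t̄η`. -/
def SEq (η t : ℕ) (π : List OPart) : Prop :=
  (⟨t * η, true⟩ : OPart) ∈ π ∧
  ∀ p ∈ π, p.isOver = true → η ∣ p.size → t * η ≤ p.size

/-- `g(π) ≥ x` (value `x`): every part starting a `(k-1)`-band has value `≥ x`. -/
def GGe (η k : ℕ) (π : List OPart) (x : ℕ) : Prop :=
  ∀ i, IsBand η π (k - 1) i → x ≤ pval π i

/-- `g(π) < x`: some part starting a `(k-1)`-band has value `< x`. -/
def GLt (η k : ℕ) (π : List OPart) (x : ℕ) : Prop :=
  ∃ i, IsBand η π (k - 1) i ∧ pval π i < x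

/-- `π ∈ B̄₀^=(α_1,…,α_λ; η,k,r | t)`. -/
def InBeq (α : ℕ → ℕ) (lam η k r t : ℕ) (π : List OPart) : Prop :=
  InB0 α lam η k r π ∧
  ((SEq η t π ∧ GGe η k π (2 * (t * η) - 1)) ∨
   (SGt η t π ∧ GGe η k π (2 * (t * η)) ∧ GLt η k π (2 * ((t + 1) * η) - 1)))

/-- `π ∈ B̄₀^>(α_1,…,α_λ; η,k,r | t)`. -/
def InBgt (α : ℕ → ℕ) (lam η k r t : ℕ) (π : List OPart) : Prop :=
  InB0 α lam η k r π ∧ SGt η t π ∧ GGe η k π (2 * ((t + 1) * η) - 1)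

/-- An `m`-band belonging to the closed interval `[(t-1)η, (t+1)η]`. -/
def BandInC (η t : ℕ) (π : List OPart) (m i : ℕ) : Prop :=
  IsBand η π m i ∧ 2 * ((t - 1) * η) ≤ pval π (i + m - 1) ∧
  pval π i ≤ 2 * ((t + 1) * η)

/-- An `m`-band belonging to `[(t-1)η, \overline{(t+1)η})`. -/
def BandInO (η t : ℕ) (π : List OPart) (m i : ℕ) : Prop :=
  IsBand η π m i ∧ 2 * ((t - 1) * η) ≤ pval π (i + m - 1) ∧
  pval π i < 2 * ((t + 1) * η) - 1

/-- An `m`-band at `i` is of type N. -/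
def TypeN (η r t : ℕ) (π : List OPart) (m i : ℕ) : Prop :=
  Int.ModEq 2 (bandSum η π i m)
    ((t : ℤ) + (r : ℤ) - 1 + (Vbar η π (pval π i) : ℤ) +
      (Obar η π (pval π (i + m - 1)) : ℤ))

/-- `π` is obtained from `μ` by inserting the part `p`. -/
def InsertPart (μ : List OPart) (p : OPart) (π : List OPart) : Prop :=
  ∃ l1 l2, μ = l1 ++ l2 ∧ π = l1 ++ p :: l2

/-- The `(k-1)`-reduction `D_t` as a relation: `μ = D_t(π)`. -/
def DtRel (η t : ℕ) (π μ : List OPart) : Prop :=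
  ((⟨t * η, true⟩ : OPart) ∈ π ∧ InsertPart μ ⟨t * η, true⟩ π) ∨
  ((⟨t * η, true⟩ : OPart) ∉ π ∧ InsertPart μ ⟨t * η, false⟩ π)

/-- `μ` has a `(k-2)`-band belonging to `[(t-1)η, \overline{(t+1)η})` of type N. -/
def HasTypeNBand (η r k t : ℕ) (μ : List OPart) : Prop :=
  ∃ i, BandInO η t μ (k - 2) i ∧ TypeN η r t μ (k - 2) i

/-- The `(k-1)`-augmentation `C_t` as a relation: `π = C_t(μ)`. -/
def CtRel (η r k t : ℕ) (μ π : List OPart) : Prop :=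
  (HasTypeNBand η r k t μ ∧ InsertPart μ ⟨t * η, false⟩ π) ∨
  (¬ HasTypeNBand η r k t μ ∧ InsertPart μ ⟨t * η, true⟩ π)

/-- `B₁`-type overpartitions: conditions (1)–(4), no overlined part divisible
by `η`, and at most `r - 1` parts not exceeding `η`. -/
def InB1over (α : ℕ → ℕ) (lam η k r : ℕ) (π : List OPart) : Prop :=
  InBbar α lam η k r π ∧ (∀ p ∈ π, p.isOver = true → ¬ η ∣ p.size) ∧ fLe η π < r

/-- `D_η`: partitions into distinct parts divisible by `η`. -/
def InD (η : ℕ) (τ : List ℕ) : Prop :=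
  List.Pairwise (· > ·) τ ∧ ∀ x ∈ τ, 0 < x ∧ η ∣ x

/-- Bressoud's class `B₁(α_1,…,α_λ; η,k,r)` of ordinary partitions. -/
def InB1nat (α : ℕ → ℕ) (lam η k r : ℕ) (σ : List ℕ) : Prop :=
  List.Pairwise (· ≥ ·) σ ∧ (∀ x ∈ σ, 0 < x) ∧
  (∀ x ∈ σ, x % η = 0 ∨ ∃ s, 1 ≤ s ∧ s ≤ lam ∧ x % η = α s) ∧
  (∀ x : ℕ, ¬ η ∣ x → σ.count x ≤ 1) ∧
  (∀ i, i + k ≤ σ.length →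
    σ.getD (i + k - 1) 0 + η ≤ σ.getD i 0 ∧
    (η ∣ σ.getD i 0 → σ.getD (i + k - 1) 0 + η < σ.getD i 0)) ∧
  σ.countP (fun x => decide (x ≤ η)) < r

/-- The class `Ā₀(α_1,…,α_λ; η,k,r)`. Congruence conditions involving `η/2`
are stated with sizes doubled. -/
def InA0 (α : ℕ → ℕ) (lam η k r : ℕ) (π : List OPart) : Prop :=
  IsOverPartition π ∧
  CongParts α lam η π ∧
  (Even lam →
    ∀ p ∈ π, p.isOver = false →
      η ∣ p.size ∧
      ¬ (2 * η * (2 * k - lam - 1) ∣ 2 * p.size) ∧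
      2 * p.size % (2 * η * (2 * k - lam - 1)) ≠ η * (2 * r - lam) ∧
      2 * p.size % (2 * η * (2 * k - lam - 1)) ≠
        2 * η * (2 * k - lam - 1) - η * (2 * r - lam)) ∧
  (¬ Even lam →
    (∀ p ∈ π, p.isOver = false →
      η ∣ 2 * p.size ∧
      p.size % (2 * η) ≠ η ∧
      ¬ (2 * η * (2 * k - lam - 1) ∣ 2 * p.size) ∧
      2 * p.size % (2 * η * (2 * k - lam - 1)) ≠ η * (2 * r - lam) ∧
      2 * p.size % (2 * η * (2 * k - lam - 1)) ≠
        2 * η * (2 * k - lam - 1) - η * (2 * r - lam)) ∧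
    (∀ p ∈ π, p.isOver = true → 2 * p.size % (2 * η) ≠ η))


/-! ### Auxiliary lemmas for `stmt_8` -/

lemma pval_oob' {π : List OPart} {i : ℕ} (h : π.length ≤ i) : pval π i = 0 := by
  unfold pval
  rw [List.getD_eq_default _ _ h]
  rfl

lemma pval_anti' {π : List OPart} (hs : List.Pairwise (fun p q : OPart => q.val ≤ p.val) π)
    {a b : ℕ} (h : a ≤ b) : pval π b ≤ pval π a := by
  rcases Nat.lt_or_ge b π.length with hb | hb
  · rcases Nat.eq_or_lt_of_le h with rfl | hab
    · exact le_refl _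
    · have ha : a < π.length := lt_trans hab hb
      unfold pval
      rw [List.getD_eq_getElem _ _ hb, List.getD_eq_getElem _ _ ha]
      exact List.pairwise_iff_getElem.mp hs a b ha hb hab
  · rw [pval_oob' hb]; exact Nat.zero_le _

lemma part_of_pval_even' {π : List OPart} {i s : ℕ} (hs : 0 < s) (h : pval π i = 2 * s) :
    π.getD i dpart = ⟨s, false⟩ := by
  rcases hq : π.getD i dpart with ⟨sz, ov⟩
  unfold pval at h
  rw [hq] at h
  cases ov
  · have hsz : sz = s := by simp [OPart.val] at h; omega
    rw [hsz]
  · exfalso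
    simp [OPart.val] at h
    omega

lemma part_of_pval_odd' {π : List OPart} {i s : ℕ} (hs : 0 < s) (h : pval π i = 2 * s - 1) :
    π.getD i dpart = ⟨s, true⟩ := by
  rcases hq : π.getD i dpart with ⟨sz, ov⟩
  unfold pval at h
  rw [hq] at h
  cases ov
  · exfalso
    simp [OPart.val] at h
    omega
  · have hsz : sz = s := by simp [OPart.val] at h; omega
    rw [hsz]

lemma countP_mid' (l1 l2 : List OPart) (p : OPart) (f : OPart → Bool) :
    (l1 ++ p :: l2).countP f = (l1 ++ l2).countP f + if f p then 1 else 0 := by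
  rw [List.countP_append, List.countP_cons, List.countP_append, Nat.add_assoc]

lemma getD_mem' {l : List OPart} {i : ℕ} (h : i < l.length) : l.getD i dpart ∈ l := by
  rw [List.getD_eq_getElem _ _ h]; exact List.getElem_mem h

lemma stmt8_aux (α : ℕ → ℕ) (lam η k r t : ℕ)
    (hη : 0 < η) (hk : 2 ≤ k) (ht : 1 ≤ t)
    (l1 l2 : List OPart) (b : Bool)
    (hB0 : InB0 α lam η k r (l1 ++ (⟨t * η, b⟩ : OPart) :: l2))
    (hS1 : b = true → ∀ q ∈ (l1 ++ (⟨t * η, b⟩ : OPart) :: l2),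
      q.isOver = true → η ∣ q.size → t * η ≤ q.size)
    (hS2 : b = false → SGt η t (l1 ++ (⟨t * η, b⟩ : OPart) :: l2))
    (hG : GGe η k (l1 ++ (⟨t * η, b⟩ : OPart) :: l2)
      (if b then 2 * (t * η) - 1 else 2 * (t * η))) :
    InBgt α lam η k r t (l1 ++ l2) := by
  set p : OPart := ⟨t * η, b⟩ with hpdef
  set π : List OPart := l1 ++ p :: l2 with hπdef
  set μ : List OPart := l1 ++ l2 with hμdef
  set j : ℕ := l1.length with hjdef
  obtain ⟨⟨⟨hsort, hpos, hcount⟩, hcong, hover, hgap, hfle⟩, hc5, heven⟩ := hB0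
  have h1A : 1 ≤ t * η := Nat.mul_pos ht hη
  have hlen : π.length = μ.length + 1 := by simp [hπdef, hμdef]; omega
  have hjle : j ≤ μ.length := by simp [hμdef, hjdef]
  have hglt : ∀ i, i < j → μ.getD i dpart = π.getD i dpart := by
    intro i hi
    rw [hμdef, hπdef, List.getD_append _ _ _ _ hi, List.getD_append _ _ _ _ hi]
  have hgge : ∀ i, j ≤ i → μ.getD i dpart = π.getD (i + 1) dpart := by
    intro i hi
    rw [hμdef, hπdef, List.getD_append_right _ _ _ _ hi,
        List.getD_append_right _ _ _ _ (by omega : l1.length ≤ i + 1)]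
    have hx : i + 1 - l1.length = (i - l1.length) + 1 := by omega
    rw [hx]
    rfl
  have hgj : π.getD j dpart = p := by
    rw [hπdef, hjdef, List.getD_append_right _ _ _ _ (le_refl _), Nat.sub_self]
    rfl
  have hpvlt : ∀ i, i < j → pval μ i = pval π i := by
    intro i hi; unfold pval; rw [hglt i hi]
  have hpvge : ∀ i, j ≤ i → pval μ i = pval π (i + 1) := by
    intro i hi; unfold pval; rw [hgge i hi]
  have hovlt : ∀ i, i < j → pover μ i = pover π i := by
    intro i hi; unfold pover; rw [hglt i hi]
  have hovge : ∀ i, j ≤ i → pover μ i = pover π (i + 1) := by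
    intro i hi; unfold pover; rw [hgge i hi]
  have hpslt : ∀ i, i < j → psize μ i = psize π i := by
    intro i hi; unfold psize; rw [hglt i hi]
  have hpvj : pval π j = p.val := by unfold pval; rw [hgj]
  have hvp : p.val = 2 * (t * η) - (if b then 1 else 0) := rfl
  have hpvt : b = true → p.val = 2 * (t * η) - 1 := by
    intro hb; rw [hvp, hb]; simp
  have hpvf : b = false → p.val = 2 * (t * η) := by
    intro hb; rw [hvp, hb]; simp
  have hple1 : 2 * (t * η) - 1 ≤ p.val := by
    rcases Bool.eq_false_or_eq_true b with hb | hb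
    · rw [hpvt hb]
    · rw [hpvf hb]; omega
  have hple2 : p.val ≤ 2 * (t * η) := by
    rw [hvp]; omega
  have hanti : ∀ {a c : ℕ}, a ≤ c → pval π c ≤ pval π a := fun h => pval_anti' hsort h
  have hμsub : List.Sublist μ π := by
    rw [hμdef, hπdef]; exact (List.sublist_cons_self p l2).append_left l1
  have hμsort : List.Pairwise (fun p q : OPart => q.val ≤ p.val) μ := hsort.sublist hμsub
  have hcp : ∀ f : OPart → Bool, f p = false → π.countP f = μ.countP f := by
    intro f hf
    rw [hπdef, hμdef, countP_mid', hf]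
    simp
  have hG' : ∀ i, IsBand η π (k - 1) i → 2 * (t * η) - 1 ≤ pval π i := by
    intro i hib
    have := hG i hib
    rcases Bool.eq_false_or_eq_true b with hb | hb <;> rw [hb] at this <;> simp at this <;> omega
  have hGf : b = false → ∀ i, IsBand η π (k - 1) i → 2 * (t * η) ≤ pval π i := by
    intro hb i hib
    have := hG i hib
    rw [hb] at this; simpa using this
  have hnomem : b = true → (⟨t * η, true⟩ : OPart) ∉ μ := by
    intro hb hmem
    have hmc : μ.count p + 1 ≤ π.count p := by
      rw [hπdef, hμdef, List.count_append, List.count_append, List.count_cons_self]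
      omega
    have h1 : 1 ≤ μ.count (⟨t * η, true⟩ : OPart) := List.one_le_count_iff.mpr hmem
    have h2 := hcount (t * η)
    rw [hpdef, hb] at hmc
    omega
  have hμnoval : b = true → ∀ i, i < μ.length → pval μ i ≠ 2 * (t * η) - 1 := by
    intro hb i hi hval
    have hget := part_of_pval_odd' h1A hval
    exact hnomem hb (hget ▸ getD_mem' hi)
  -- every (k-1)-band of μ lies strictly before the removed position
  have hkey : ∀ i, IsBand η μ (k - 1) i → i + (k - 1) ≤ j := by
    intro i hib
    obtain ⟨h1, h2, h3⟩ := hib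
    by_contra hcon
    push_neg at hcon
    have hik2 : i + (k - 1) - 1 = i + (k - 2) := by omega
    rw [hik2] at h2 h3
    rcases Nat.lt_or_ge i j with hij | hij
    · -- removed part inside the band : contradiction with the gap condition
      have e1 := hpvlt i hij
      have e2 : pval μ (i + (k - 2)) = pval π (i + k - 1) := by
        have hx : i + (k - 2) + 1 = i + k - 1 := by omega
        rw [hpvge _ (by omega), hx]
      have e3 := hovlt i hij
      have hgapi := hgap i (by omega)
      rw [e1, e2] at h2 h3
      rcases hov : pover π i with _ | _
      · have := hgapi.2 hov; omega
      · have := h3 (by rw [e3]; exact hov); omega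
    · -- band entirely after the removed part : contradiction
      have e1 := hpvge i hij
      have e2 : pval μ (i + (k - 2)) = pval π (i + k - 1) := by
        have hx : i + (k - 2) + 1 = i + k - 1 := by omega
        rw [hpvge _ (by omega), hx]
      have e3 := hovge i hij
      have hbandπ : IsBand η π (k - 1) (i + 1) := by
        refine ⟨by omega, ?_, ?_⟩
        · have hx : i + 1 + (k - 1) - 1 = i + k - 1 := by omega
          rw [hx]; rw [e1, e2] at h2; exact h2
        · have hx : i + 1 + (k - 1) - 1 = i + k - 1 := by omega
          rw [hx]; intro hov
          rw [e1, e2] at h3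
          exact h3 (by rw [e3]; exact hov)
      have hlow := hG' (i + 1) hbandπ
      have hup : pval π (i + 1) ≤ p.val := by rw [← hpvj]; exact hanti (by omega)
      rcases Bool.eq_false_or_eq_true b with hb | hb
      · -- overlined removed part : would duplicate the overlined t*η
        have hpv := hpvt hb
        have hval : pval μ i = 2 * (t * η) - 1 := by rw [e1]; omega
        exact hμnoval hb i (by omega) hval
      · -- non-overlined removed part
        have hpv := hpvf hb
        have hGff := hGf hb (i + 1) hbandπ
        have hv1 : pval π (i + 1) = 2 * (t * η) := by omega
        have hvi : pval π i = 2 * (t * η) := by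
          have hu : pval π i ≤ p.val := by rw [← hpvj]; exact hanti hij
          have hl : pval π (i + 1) ≤ pval π i := hanti (by omega)
          omega
        have hgeti := part_of_pval_even' h1A hvi
        have hovi : pover π i = false := by unfold pover; rw [hgeti]
        have hst := (hgap i (by omega)).2 hovi
        have hb2 := hbandπ.2.1
        have hx : i + 1 + (k - 1) - 1 = i + k - 1 := by omega
        rw [hx] at hb2
        omega
  -- transfer of bands from μ to π
  have htrans : ∀ i, IsBand η μ (k - 1) i →
      IsBand η π (k - 1) i ∧ pval μ i = pval π i ∧
      pval μ (i + (k - 1) - 1) = pval π (i + (k - 1) - 1) ∧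
      (b = true → 2 * (t * η) ≤ pval π (i + (k - 1) - 1)) := by
    intro i hib
    have hkj := hkey i hib
    obtain ⟨h1, h2, h3⟩ := hib
    have hi2j : i + (k - 1) - 1 < j := by omega
    have hij : i < j := by omega
    have e1 := hpvlt i hij
    have e2 := hpvlt _ hi2j
    have e3 := hovlt i hij
    have hbπ : IsBand η π (k - 1) i := by
      refine ⟨by omega, by rw [← e1, ← e2]; exact h2, fun hov => ?_⟩
      rw [← e1, ← e2]; exact h3 (by rw [e3]; exact hov)
    have hlow : p.val ≤ pval π (i + (k - 1) - 1) := by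
      rw [← hpvj]; exact hanti (by omega)
    refine ⟨hbπ, e1, e2, ?_⟩
    intro hb
    by_contra hcon
    have hpv := hpvt hb
    have hval : pval μ (i + (k - 1) - 1) = 2 * (t * η) - 1 := by omega
    exact hμnoval hb _ (by omega) hval
  have hGGeμ : GGe η k μ (2 * ((t + 1) * η) - 1) := by
    intro i hib
    obtain ⟨hbπ, e1, e2, _⟩ := htrans i hib
    by_contra hcon
    push_neg at hcon
    have hkj := hkey i hib
    have hgapi := (hgap i (by omega)).1
    have hlow2 : p.val ≤ pval π (i + k - 1) := by
      rw [← hpvj]; exact hanti (by omega)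
    rw [e1] at hcon
    have hexp : 2 * ((t + 1) * η) = 2 * (t * η) + 2 * η := by ring
    rw [hexp] at hcon
    omega
  have hEvenμ : ∀ i, IsBand η μ (k - 1) i → EvenBand η r μ (k - 1) i := by
    intro i hib
    obtain ⟨hbπ, e1, e2, hlow2⟩ := htrans i hib
    have hkj := hkey i hib
    have hbsum : bandSum η μ i (k - 1) = bandSum η π i (k - 1) := by
      unfold bandSum
      refine Finset.sum_congr rfl fun l hl => ?_
      have hlk : l < k - 1 := Finset.mem_range.mp hl
      rw [hpslt _ (by omega)]
    have hVbar : ∀ N, Vbar η μ N = Vbar η π N := by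
      intro N
      have hd : p.size % η = 0 := by rw [hpdef]; exact Nat.mul_mod_left t η
      unfold Vbar
      exact (hcp _ (by simp [hd])).symm
    have hObar : Obar η μ (pval π (i + (k - 1) - 1)) = Obar η π (pval π (i + (k - 1) - 1)) := by
      have hfp : (fun q : OPart => q.isOver && decide (pval π (i + (k - 1) - 1) ≤ q.val) &&
          decide (q.size % η = 0)) p = false := by
        rcases Bool.eq_false_or_eq_true b with hb | hb
        · have h2t := hlow2 hb
          have hpv := hpvt hb
          have hdec : (decide (pval π (i + (k - 1) - 1) ≤ p.val)) = false := by
            simp only [decide_eq_false_iff_not]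
            omega
          simp [hdec]
        · simp [hpdef, hb]
      unfold Obar
      exact (hcp _ hfp).symm
    unfold EvenBand
    rw [hbsum, e1, e2, hVbar, hObar]
    exact heven i hbπ
  have hc5μ : Cond5 η k r μ := by
    intro hfler hnmem
    exfalso
    have hfleπ : fLe η π = fLe η μ + if p.val ≤ 2 * η then 1 else 0 := by
      unfold fLe
      rw [hπdef, hμdef, countP_mid']
      congr 1
      unfold OPart.val
      rcases Bool.eq_false_or_eq_true b with hb | hb <;> rw [hpdef, hb] <;> simp
    rcases le_or_gt p.val (2 * η) with hple | hpgt
    · rw [if_pos hple] at hfleπ; omega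
    · rw [if_neg (by omega)] at hfleπ
      have hfleπ' : fLe η π = r := by omega
      have h2t : 2 * η ≤ t * η := by
        have h1t : 2 ≤ t := by
          rcases Nat.lt_or_ge t 2 with h | h
          · exfalso
            have hte : t = 1 := by omega
            subst hte
            rw [one_mul] at hple2
            omega
          · exact h
        exact Nat.mul_le_mul_right η h1t
      have hnmemπ : (⟨η, true⟩ : OPart) ∉ π := by
        intro hmem
        rw [hπdef] at hmem
        rcases List.mem_append.mp hmem with h | h
        · exact hnmem (by rw [hμdef]; exact List.mem_append.mpr (Or.inl h))
        · rcases List.mem_cons.mp h with h | h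
          · have hpe : p.val = 2 * η - 1 := by rw [← h]; rfl
            omega
          · exact hnmem (by rw [hμdef]; exact List.mem_append.mpr (Or.inr h))
      obtain ⟨i0, hb0, hlt0⟩ := hc5 hfleπ' hnmemπ
      have hlow := hG' i0 hb0
      omega
  have hgapμ : ∀ i, i + k ≤ μ.length →
      pval μ (i + k - 1) + 2 * η ≤ pval μ i ∧
      (pover μ i = false → pval μ (i + k - 1) + 2 * η < pval μ i) := by
    intro i hik
    rcases Nat.lt_or_ge (i + k) (j + 1) with hcase | hcase
    · have e1 := hpvlt i (by omega)
      have e2 := hpvlt (i + k - 1) (by omega)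
      have e3 := hovlt i (by omega)
      rw [e1, e2, e3]
      exact hgap i (by omega)
    rcases Nat.lt_or_ge i j with hij | hij
    · have e1 := hpvlt i hij
      have e2 : pval μ (i + k - 1) = pval π (i + k) := by
        have hx : i + k - 1 + 1 = i + k := by omega
        rw [hpvge _ (by omega), hx]
      have e3 := hovlt i hij
      have hg := hgap i (by omega)
      have hmono : pval π (i + k) ≤ pval π (i + k - 1) := hanti (by omega)
      constructor
      · rw [e1, e2]; omega
      · intro hov; rw [e3] at hov; have := hg.2 hov; rw [e1, e2]; omega
    · have e1 := hpvge i hij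
      have e2 : pval μ (i + k - 1) = pval π (i + k) := by
        have hx : i + k - 1 + 1 = i + k := by omega
        rw [hpvge _ (by omega), hx]
      have e3 := hovge i hij
      have hg := hgap (i + 1) (by omega)
      have hx : i + 1 + k - 1 = i + k := by omega
      rw [hx] at hg
      rw [e1, e2, e3]
      exact hg
  have hSGtμ : SGt η t μ := by
    intro q hq hover' hdvd
    have hqπ : q ∈ π := hμsub.subset hq
    rcases Bool.eq_false_or_eq_true b with hb | hb
    · have hle := hS1 hb q hqπ hover' hdvd
      rcases Nat.lt_or_ge (t * η) q.size with h | h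
      · exact h
      · exfalso
        have hqs : q.size = t * η := by omega
        have hqe : q = ⟨t * η, true⟩ := by
          rcases q with ⟨s0, o0⟩
          simp only at hqs hover'
          rw [hqs, hover']
        exact hnomem hb (hqe ▸ hq)
    · exact hS2 hb q hqπ hover' hdvd
  exact ⟨⟨⟨⟨hμsort, fun q hq => hpos q (hμsub.subset hq),
      fun s => le_trans (hμsub.count_le _) (hcount s)⟩,
      fun q hq => hcong q (hμsub.subset hq),
      fun q hq => hover q (hμsub.subset hq),
      hgapμ,
      le_trans hμsub.countP_le hfle⟩, hc5μ, hEvenμ⟩, hSGtμ, hGGeμ⟩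

theorem stmt_8 (α : ℕ → ℕ) (lam η k r : ℕ)
    (hη : 0 < η)
    (hαpos : ∀ i, 1 ≤ i → i ≤ lam → 0 < α i ∧ α i < η)
    (hαmono : ∀ i j, 1 ≤ i → i < j → j ≤ lam → α i < α j)
    (hαsym : ∀ i, 1 ≤ i → i ≤ lam → α i = η - α (lam + 1 - i))
    (hrk : r < k) (hlr : lam ≤ r) (hlk : lam + 1 < k)
    (t : ℕ) (ht : 1 ≤ t) (π μ : List OPart)
    (hπ : InBeq α lam η k r t π) (hD : DtRel η t π μ) :
    InBgt α lam η k r t μ ∧ wt π = wt μ + t * η ∧ π.length = μ.length + 1 := by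
  have hk2 : 2 ≤ k := by omega
  obtain ⟨hB0, hbranch⟩ := hπ
  rcases hD with ⟨hmem, l1, l2, hμeq, hπeq⟩ | ⟨hnmem, l1, l2, hμeq, hπeq⟩
  · -- overlined part removed
    subst hπeq; subst hμeq
    rcases hbranch with ⟨hseq, hgge⟩ | ⟨hsgt, _, _⟩
    · refine ⟨stmt8_aux α lam η k r t hη hk2 ht l1 l2 true hB0
        (fun _ => hseq.2) (fun h => by simp at h) (by simpa using hgge), ?_, ?_⟩
      · simp [wt]; omega
      · simp; omega
    · exact absurd (hsgt _ hmem rfl (dvd_mul_left η t)) (lt_irrefl _)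
  · -- non-overlined part removed
    subst hπeq; subst hμeq
    rcases hbranch with ⟨hseq, _⟩ | ⟨hsgt, hgge, _⟩
    · exact absurd hseq.1 hnmem
    · refine ⟨stmt8_aux α lam η k r t hη hk2 ht l1 l2 false hB0
        (fun h => by simp at h) (fun _ => hsgt) (by simpa using hgge), ?_, ?_⟩
      · simp [wt]; omega
      · simp; omega
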